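/- Let N ≥ 3, φ ∈ ℝ^N, and l ∈ ℤ, and set c := (Φ + 2πl)/N. Define θ by θ_N = 0 and θ_j = Σ_{k=j}^{N−1} (φ_k − c) for j = 1,…,N−1. Then s_k ≡ c (mod 2π) for all k = 1,…,N (in particular s_1 = … = s_{N−1} = c and s_N = c − 2πl), θ is a stationary point of F_φ, F_φ(θ) = N(1 − cos c), and det 𝓗(θ) = N (cos c)^{N−1}. -/

import Mathlib

open Real Filter

/-- The variable `s k = φ k + θ (k+1) - θ k` (indices cyclic mod `N`,
0-based; paper index `k` corresponds to `k-1` here, so `s_N` is `sVar` at `lastIdx`). -/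
noncomputable def sVar (N : ℕ) (hN : 0 < N) (φ θ : Fin N → ℝ) (k : Fin N) : ℝ :=
  φ k + θ ⟨((k : ℕ) + 1) % N, Nat.mod_lt _ hN⟩ - θ k

/-- The lattice Landau gauge functional / random phase XY Hamiltonian
`F_φ(θ) = Σ_k (1 - cos(φ_k + θ_{k+1} - θ_k))` with periodic boundary conditions. -/
noncomputable def Fxy (N : ℕ) (hN : 0 < N) (φ θ : Fin N → ℝ) : ℝ :=
  ∑ k : Fin N, (1 - Real.cos (sVar N hN φ θ k))

/-- The index of the fixed site (paper site `N`). -/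
def lastIdx (N : ℕ) (hN : 0 < N) : Fin N :=
  ⟨N - 1, Nat.sub_lt hN Nat.one_pos⟩

/-- `θ` is a stationary point of `F_φ` regarded as a function of the free
coordinates `θ_1, …, θ_{N-1}` (0-based: coordinates `k` with `k < N-1`),
with `θ` at `lastIdx` held fixed: all partial derivatives vanish. -/
noncomputable def IsStationaryPt (N : ℕ) (hN : 0 < N) (φ θ : Fin N → ℝ) : Prop :=
  ∀ k : Fin N, (k : ℕ) < N - 1 →
    deriv (fun t : ℝ => Fxy N hN φ (Function.update θ k t)) (θ k) = 0

/-- The `(N-1) × (N-1)` tridiagonal matrix with entries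
`δ_{ij}(c_{i-1} + c_i) - δ_{i-1,j} c_{i-1} - δ_{i+1,j} c_i`, where indices are
0-based (paper index `i` ↦ `i-1`) and `c_0 := c_N` (cyclic predecessor). -/
noncomputable def hessC (N : ℕ) (hN : 0 < N) (c : Fin N → ℝ) :
    Matrix (Fin (N - 1)) (Fin (N - 1)) ℝ :=
  Matrix.of fun i j =>
    (if i = j then
        c ⟨((i : ℕ) + (N - 1)) % N, Nat.mod_lt _ hN⟩ +
          c ⟨(i : ℕ), lt_of_lt_of_le i.isLt (Nat.sub_le N 1)⟩
      else 0)
    - (if (i : ℕ) = (j : ℕ) + 1 then c ⟨((i : ℕ) + (N - 1)) % N, Nat.mod_lt _ hN⟩ else 0)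
    - (if (j : ℕ) = (i : ℕ) + 1 then c ⟨(i : ℕ), lt_of_lt_of_le i.isLt (Nat.sub_le N 1)⟩ else 0)

/-- The Hessian of `F_φ` (with the last coordinate fixed) at a configuration `θ`. -/
noncomputable def hessAt (N : ℕ) (hN : 0 < N) (φ θ : Fin N → ℝ) :
    Matrix (Fin (N - 1)) (Fin (N - 1)) ℝ :=
  hessC N hN fun k => Real.cos (sVar N hN φ θ k)

/-- `F_φ` as a function of the free coordinates only: the coordinate at
`lastIdx` is overwritten by `0`. -/
noncomputable def FxyFixed (N : ℕ) (hN : 0 < N) (φ : Fin N → ℝ) (η : Fin N → ℝ) : ℝ :=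
  Fxy N hN φ (Function.update η (lastIdx N hN) 0)

/-- The value `σ = (Φ + 2πl - π Σ_{k=1}^{N-1} q_k) / (1 + Σ_{k=1}^{N-1} (-1)^{q_k})`. -/
noncomputable def sigmaVal (N : ℕ) (hN : 0 < N) (φ : Fin N → ℝ) (q : Fin N → ℕ) (l : ℤ) : ℝ :=
  ((∑ k, φ k) + 2 * Real.pi * (l : ℝ)
      - Real.pi * ∑ k ∈ Finset.univ.erase (lastIdx N hN), (q k : ℝ)) /
    (1 + ∑ k ∈ Finset.univ.erase (lastIdx N hN), (-1 : ℝ) ^ (q k))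

lemma sVar_succ_eq (N : ℕ) [NeZero N] (hN : 0 < N) (φ θ : Fin N → ℝ) (k : Fin N) :
    sVar N hN φ θ k = φ k + θ (k + 1) - θ k := by
  have h : (⟨((k : ℕ) + 1) % N, Nat.mod_lt _ hN⟩ : Fin N) = k + 1 := by
    apply Fin.ext
    simp only [Fin.add_def, Fin.val_one']
    rw [Nat.add_mod_mod]
  unfold sVar
  rw [h]

noncomputable def tri (a : ℝ) (n : ℕ) : Matrix (Fin n) (Fin n) ℝ :=
  Matrix.of fun i j =>
    if (i : ℕ) = j then 2*a else if (i:ℕ) = (j:ℕ)+1 ∨ (j:ℕ) = (i:ℕ)+1 then -a else 0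

theorem tri_det (a : ℝ) : ∀ n, (tri a n).det = (n+1) * a^n := by
  have key : ∀ n, (tri a n).det = (n+1)*a^n ∧ (tri a (n+1)).det = (n+2)*a^(n+1) := by
    intro n
    induction n with
    | zero =>
      constructor
      · simp [Matrix.det_fin_zero]
      · rw [Matrix.det_fin_one]
        simp [tri]
    | succ n ih =>
      refine ⟨by push_cast at ih ⊢; linarith [ih.2], ?_⟩
      have hrec : (tri a (n+2)).det = 2*a * (tri a (n+1)).det - a^2 * (tri a n).det := by
        rw [Matrix.det_succ_row_zero]
        rw [Fin.sum_univ_succ, Fin.sum_univ_succ]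
        have hz : ∀ j : Fin n, (-1:ℝ)^((j.succ.succ : Fin (n+2)) : ℕ) *
            tri a (n+2) 0 j.succ.succ *
            ((tri a (n+2)).submatrix Fin.succ j.succ.succ.succAbove).det = 0 := by
          intro j
          have : tri a (n+2) 0 j.succ.succ = 0 := by
            simp [tri]
          simp [this]
        rw [Finset.sum_eq_zero fun j _ => hz j, add_zero]
        have h00 : tri a (n+2) 0 0 = 2*a := by simp [tri]
        have h01 : tri a (n+2) 0 (Fin.succ 0) = -a := by simp [tri]
        have hM0 : (tri a (n+2)).submatrix Fin.succ ((0 : Fin (n+2)).succAbove) = tri a (n+1) := by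
          ext i j
          simp only [Matrix.submatrix_apply, Fin.zero_succAbove, tri, Matrix.of_apply, Fin.val_succ]
          split_ifs <;> first | rfl | omega
        have hsa : ∀ i : Fin (n+1), ((((0:Fin (n+1)).succ).succAbove i) : ℕ) =
            if (i:ℕ) < 1 then (i:ℕ) else (i:ℕ)+1 := by
          intro i
          by_cases h : i.castSucc < (0:Fin (n+1)).succ
          · rw [Fin.succAbove_of_castSucc_lt _ _ h]
            have : (i:ℕ) < 1 := by simpa [Fin.lt_def] using h
            simp [this]
          · rw [Fin.succAbove_of_le_castSucc _ _ (not_lt.1 h)]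
            have : ¬ (i:ℕ) < 1 := by
              simpa [Fin.lt_def] using h
            simp [this]
        have hB : ((tri a (n+2)).submatrix Fin.succ ((0:Fin (n+1)).succ).succAbove).det
            = (-a) * (tri a n).det := by
          set B := (tri a (n+2)).submatrix Fin.succ ((0:Fin (n+1)).succ).succAbove with hBdef
          rw [Matrix.det_succ_column_zero, Fin.sum_univ_succ]
          have hz2 : ∀ i : Fin n, (-1:ℝ)^((i.succ : Fin (n+1)):ℕ) * B i.succ 0 *
              (B.submatrix i.succ.succAbove Fin.succ).det = 0 := by
            intro i
            have : B i.succ 0 = 0 := by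
              simp only [hBdef, Matrix.submatrix_apply, tri, Matrix.of_apply, Fin.val_succ]
              rw [show ((((0:Fin (n+1)).succ).succAbove 0 : Fin (n+2)) : ℕ) = 0 by
                rw [hsa]; simp]
              simp
            simp [this]
          rw [Finset.sum_eq_zero fun i _ => hz2 i, add_zero]
          have hB00 : B 0 0 = -a := by
            simp only [hBdef, Matrix.submatrix_apply, tri, Matrix.of_apply]
            rw [show ((((0:Fin (n+1)).succ).succAbove 0 : Fin (n+2)) : ℕ) = 0 by rw [hsa]; simp]
            simp
          have hmin : B.submatrix ((0 : Fin (n+1)).succAbove) Fin.succ = tri a n := by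
            ext i j
            simp only [hBdef, Matrix.submatrix_apply, Fin.zero_succAbove, tri, Matrix.of_apply,
              Fin.val_succ]
            rw [hsa]
            simp only [Fin.val_succ]
            have : ¬ ((j:ℕ)+1 < 1) := by omega
            rw [if_neg this]
            split_ifs <;> first | rfl | omega
          rw [hB00, hmin]
          simp
        rw [h00, h01, hM0, hB]
        simp only [Fin.val_zero, Fin.val_succ, pow_zero, pow_one]
        ring
      rw [hrec, ih.1, ih.2]
      push_cast
      ring
  exact fun n => (key n).1

/-- the symmetric configurations. For `c = (Φ + 2πl)/N` and `θ`
given by `θ_N = 0`, `θ_j = Σ_{k=j}^{N-1} (φ_k - c)`, one has `s_k ≡ c (mod 2π)`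
for all `k` (indeed `s_1 = … = s_{N-1} = c` and `s_N = c - 2πl`), `θ` is a
stationary point of `F_φ`, `F_φ(θ) = N(1 - cos c)`, and
`det 𝓗(θ) = N (cos c)^{N-1}`. -/
theorem stmt12 (N : ℕ) (hN : 3 ≤ N) (φ : Fin N → ℝ) (l : ℤ) :
    let c : ℝ := ((∑ k, φ k) + 2 * π * (l : ℝ)) / N
    let θ : Fin N → ℝ := fun j =>
      ∑ k ∈ Finset.univ.filter (fun k : Fin N => (j : ℕ) ≤ (k : ℕ) ∧ (k : ℕ) < N - 1),
        (φ k - c)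
    θ (lastIdx N (by omega)) = 0 ∧
    (∀ k : Fin N, ∃ m : ℤ, sVar N (by omega) φ θ k = c + 2 * π * m) ∧
    (∀ k : Fin N, (k : ℕ) < N - 1 → sVar N (by omega) φ θ k = c) ∧
    sVar N (by omega) φ θ (lastIdx N (by omega)) = c - 2 * π * l ∧
    IsStationaryPt N (by omega) φ θ ∧
    Fxy N (by omega) φ θ = N * (1 - Real.cos c) ∧
    (hessAt N (by omega) φ θ).det = N * (Real.cos c) ^ (N - 1) := by
  intro c θ
  have h3 : 0 < N := by omega
  haveI : NeZero N := ⟨by omega⟩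
  have hone : ((1 : Fin N) : ℕ) = 1 := by
    rw [Fin.val_one']; exact Nat.mod_eq_of_lt (by omega)
  have hθval : ∀ j : Fin N, θ j =
      ∑ k ∈ Finset.univ.filter (fun k : Fin N => (j : ℕ) ≤ (k : ℕ) ∧ (k : ℕ) < N - 1),
        (φ k - c) := fun j => rfl
  have hlast : θ (lastIdx N h3) = 0 := by
    rw [hθval, Finset.filter_false_of_mem, Finset.sum_empty]
    intro m _
    simp only [lastIdx]
    omega
  have hθstep : ∀ j : Fin N, (j : ℕ) < N - 1 → θ j = (φ j - c) + θ (j + 1) := by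
    intro j hj
    have hval : ((j + 1 : Fin N) : ℕ) = (j : ℕ) + 1 := by
      rw [Fin.add_def, hone]; exact Nat.mod_eq_of_lt (by omega)
    rw [hθval, hθval, hval]
    rw [show (Finset.univ.filter fun m : Fin N => (j : ℕ) ≤ (m : ℕ) ∧ (m : ℕ) < N - 1)
        = insert j (Finset.univ.filter fun m : Fin N =>
            (j : ℕ) + 1 ≤ (m : ℕ) ∧ (m : ℕ) < N - 1) by
      ext m
      simp only [Finset.mem_filter, Finset.mem_univ, true_and, Finset.mem_insert, Fin.ext_iff]
      omega]
    rw [Finset.sum_insert (by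
      simp only [Finset.mem_filter, Finset.mem_univ, true_and]
      omega)]
  have hs3 : ∀ k : Fin N, (k : ℕ) < N - 1 → sVar N h3 φ θ k = c := by
    intro k hk
    rw [sVar_succ_eq N h3, hθstep k hk]; ring
  have hlast1 : (lastIdx N h3) + 1 = (0 : Fin N) := by
    apply Fin.ext
    simp only [Fin.add_def, hone, lastIdx, Fin.val_zero]
    have h : N - 1 + 1 = N := by omega
    rw [h, Nat.mod_self]
  have hfil0 : (Finset.univ.filter fun m : Fin N =>
        ((0 : Fin N) : ℕ) ≤ (m : ℕ) ∧ (m : ℕ) < N - 1)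
      = Finset.univ.erase (lastIdx N h3) := by
    have h0 : ((0 : Fin N) : ℕ) = 0 := by simp
    have hlv : ((lastIdx N h3 : Fin N) : ℕ) = N - 1 := rfl
    ext m
    have := m.isLt
    simp only [Finset.mem_filter, Finset.mem_univ, true_and, Finset.mem_erase, and_true,
      Fin.ext_iff, hlv, h0]
    omega
  have hNne : (N : ℝ) ≠ 0 := Nat.cast_ne_zero.mpr (by omega)
  have hsumφ : ∑ k, φ k = N * c - 2 * π * l := by
    have hc : c = ((∑ k, φ k) + 2 * π * (l : ℝ)) / N := rfl
    rw [hc]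
    field_simp
    ring
  have hs4 : sVar N h3 φ θ (lastIdx N h3) = c - 2 * π * l := by
    rw [sVar_succ_eq N h3, hlast1, hlast, hθval, hfil0]
    have h1 : ∑ m ∈ Finset.univ.erase (lastIdx N h3), (φ m - c)
        = (∑ m, (φ m - c)) - (φ (lastIdx N h3) - c) := by
      rw [← Finset.sum_erase_add Finset.univ _ (Finset.mem_univ (lastIdx N h3))]; ring
    rw [h1, Finset.sum_sub_distrib, Finset.sum_const, Finset.card_univ, Fintype.card_fin, hsumφ]
    push_cast [nsmul_eq_mul]
    ring
  have hs2 : ∀ k : Fin N, ∃ m : ℤ, sVar N h3 φ θ k = c + 2 * π * m := by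
    intro k
    by_cases hk : (k : ℕ) < N - 1
    · exact ⟨0, by rw [hs3 k hk]; push_cast; ring⟩
    · have hkl : k = lastIdx N h3 := Fin.ext (by
        have := k.isLt; simp only [lastIdx]; omega)
      exact ⟨-l, by rw [hkl, hs4]; push_cast; ring⟩
  have hcosθ : ∀ k : Fin N, Real.cos (sVar N h3 φ θ k) = Real.cos c := by
    intro k
    obtain ⟨m, hm⟩ := hs2 k
    rw [hm, show c + 2*π*(m:ℝ) = c + (m:ℝ)*(2*π) by ring, Real.cos_add_int_mul_two_pi]
  have hsinθ : ∀ k : Fin N, Real.sin (sVar N h3 φ θ k) = Real.sin c := by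
    intro k
    obtain ⟨m, hm⟩ := hs2 k
    rw [hm, show c + 2*π*(m:ℝ) = c + (m:ℝ)*(2*π) by ring, Real.sin_add_int_mul_two_pi]
  refine ⟨hlast, hs2, hs3, hs4, ?_, ?_, ?_⟩
  · -- stationarity
    intro k hk
    have hterm : ∀ j : Fin N, HasDerivAt
        (fun t : ℝ => 1 - Real.cos (sVar N h3 φ (Function.update θ k t) j))
        ((if j + 1 = k then Real.sin c else 0) - (if j = k then Real.sin c else 0)) (θ k) := by
      intro j
      by_cases h1 : j + 1 = k <;> by_cases h2 : j = k
      · exfalso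
        rw [h2] at h1
        have h10 : (1 : Fin N) = 0 := add_eq_left.mp h1
        have := congrArg Fin.val h10
        rw [hone] at this
        simp at this
      · have hf : (fun t : ℝ => 1 - Real.cos (sVar N h3 φ (Function.update θ k t) j))
            = fun t : ℝ => 1 - Real.cos (φ j + t - θ j) := by
          funext t
          rw [sVar_succ_eq N h3, h1, Function.update_self, Function.update_of_ne h2]
        rw [hf, if_pos h1, if_neg h2, sub_zero]
        have base : HasDerivAt (fun t : ℝ => φ j + t - θ j) 1 (θ k) := by
          simpa using ((hasDerivAt_id (θ k)).const_add (φ j)).sub_const (θ j)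
        have hc := (Real.hasDerivAt_cos (φ j + θ k - θ j)).comp (θ k) base
        have hx : φ j + θ k - θ j = sVar N h3 φ θ j := by
          rw [sVar_succ_eq N h3, h1]
        have hd := hc.const_sub 1
        have hsj : Real.sin (φ j + θ k - θ j) = Real.sin c := by rw [hx, hsinθ]
        simpa [Function.comp, hsj] using hd
      · subst h2
        have hf : (fun t : ℝ => 1 - Real.cos (sVar N h3 φ (Function.update θ j t) j))
            = fun t : ℝ => 1 - Real.cos (φ j + θ (j + 1) - t) := by
          funext t
          rw [sVar_succ_eq N h3, Function.update_of_ne h1, Function.update_self]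
        rw [hf, if_neg h1, if_pos rfl, zero_sub]
        have base : HasDerivAt (fun t : ℝ => φ j + θ (j + 1) - t) (-1) (θ j) :=
          (hasDerivAt_id (θ j)).const_sub (φ j + θ (j + 1))
        have hc := (Real.hasDerivAt_cos (φ j + θ (j + 1) - θ j)).comp (θ j) base
        have hd := hc.const_sub 1
        have hsj : Real.sin (φ j + θ (j + 1) - θ j) = Real.sin c := by
          rw [← sVar_succ_eq N h3, hsinθ]
        simpa [Function.comp, hsj] using hd
      · have hf : (fun t : ℝ => 1 - Real.cos (sVar N h3 φ (Function.update θ k t) j))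
            = fun _ : ℝ => 1 - Real.cos (φ j + θ (j + 1) - θ j) := by
          funext t
          rw [sVar_succ_eq N h3, Function.update_of_ne h1, Function.update_of_ne h2]
        rw [hf, if_neg h1, if_neg h2, sub_zero]
        simpa using hasDerivAt_const (θ k) (1 - Real.cos (φ j + θ (j + 1) - θ j))
    have hsum : HasDerivAt (fun t : ℝ => Fxy N h3 φ (Function.update θ k t))
        (∑ j : Fin N, ((if j + 1 = k then Real.sin c else 0)
          - (if j = k then Real.sin c else 0))) (θ k) :=
      HasDerivAt.fun_sum fun j _ => hterm j
    have hzero : (∑ j : Fin N, ((if j + 1 = k then Real.sin c else 0)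
        - (if j = k then Real.sin c else 0))) = 0 := by
      rw [Finset.sum_sub_distrib]
      have e1 : (∑ j : Fin N, (if j + 1 = k then Real.sin c else 0)) = Real.sin c := by
        rw [Finset.sum_congr rfl (fun j _ => if_congr (show (j + 1 = k) ↔ (j = k - 1) from
          ⟨fun h => eq_sub_of_add_eq h, fun h => by rw [h]; exact sub_add_cancel k 1⟩) rfl rfl)]
        rw [Finset.sum_ite_eq' Finset.univ (k - 1) fun _ => Real.sin c]
        simp
      have e2 : (∑ j : Fin N, (if j = k then Real.sin c else 0)) = Real.sin c := by
        rw [Finset.sum_ite_eq' Finset.univ k fun _ => Real.sin c]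
        simp
      rw [e1, e2, sub_self]
    exact hsum.deriv.trans hzero
  · show (∑ j : Fin N, (1 - Real.cos (sVar N h3 φ θ j))) = (N : ℝ) * (1 - Real.cos c)
    rw [Finset.sum_congr rfl fun j _ => by rw [hcosθ j]]
    rw [Finset.sum_const, Finset.card_univ, Fintype.card_fin, nsmul_eq_mul]
  · show (hessC N h3 fun k => Real.cos (sVar N h3 φ θ k)).det
      = (N : ℝ) * Real.cos c ^ (N - 1)
    have hH : (hessC N h3 fun k => Real.cos (sVar N h3 φ θ k)) = tri (Real.cos c) (N - 1) := by
      ext i j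
      simp only [hessC, tri, Matrix.of_apply, hcosθ, Fin.ext_iff]
      split_ifs <;> first | ring1 | (exfalso; omega)
    rw [hH, tri_det]
    rw [Nat.cast_sub (by omega : 1 ≤ N), Nat.cast_one]
    ring
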